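/- Let p = 7 and let O be a complete DVR with uniformizer π and ramification index e = 3 over ℤ_7, Γ = O ⊗ ℤ_7[ζ_7] where λ^6 = -7. Set x₁ = λ⁵/π, x₂ = λ⁵/π², x₃ = λ⁴/π. Then T = Γ + x₁O + x₂O + x₃O is an O-subalgebra of the total fraction ring of Γ. -/

import Mathlib

lemma aux_mul {F : Type} [CommRing F]
    (P L U x₁ x₂ x₃ : F)
    (hcan : ∀ y z : F, y * P = z * P → y = z)
    (hL6 : L ^ 6 = -(P ^ 3 * U))
    (h1 : x₁ * P = L ^ 5) (h2 : x₂ * P ^ 2 = L ^ 5) (h3 : x₃ * P = L ^ 4)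
    (G H A1 A2 A3 C1 C2 C3 r0 r1 r2 r3 r4 r5 s0 s1 s2 s3 s4 s5 t0 t1 t2 t3 t4 t5 : F)
    (hG1 : G * C1 + H * A1 = r0 + r1*L + r2*L^2 + r3*L^3 + r4*L^4 + r5*L^5)
    (hG2 : G * C2 + H * A2 = s0 + s1*L + s2*L^2 + s3*L^3 + s4*L^4 + s5*L^5)
    (hG3 : G * C3 + H * A3 = t0 + t1*L + t2*L^2 + t3*L^3 + t4*L^4 + t5*L^5) :
    (G + x₁*A1 + x₂*A2 + x₃*A3) * (H + x₁*C1 + x₂*C2 + x₃*C3)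
      = (G*H
          + (-(P*U*L^4))*(A1*C1) + (-(U*L^4))*(A1*C2 + A2*C1)
          + (-(P*U*L^3))*(A1*C3 + A3*C1) + (-(U*L^3))*(A2*C3 + A3*C2)
          + (-(P*U*L^2))*(A3*C3)
          + (-(P^2*U))*(r1 + r2*L + r3*L^2 + r4*L^3 + r5*L^4)
          + (-(P*U))*(s1 + s2*L + s3*L^2 + s4*L^3 + s5*L^4)
          + (-(P^2*U))*(t2 + t3*L + t4*L^2 + t5*L^3))
        + x₁ * (r0 + t1) + x₂ * s0 + x₃ * (t0 + (-(U*(A2*C2)))) := by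
  have k1 : ∀ k : ℕ, x₁ * L ^ (k+1) = -(P^2*U*L^k) := fun k => hcan _ _ (by
    linear_combination L^(k+1) * h1 + L^k * hL6)
  have k2 : ∀ k : ℕ, x₂ * L ^ (k+1) = -(P*U*L^k) := fun k => hcan _ _ (hcan _ _ (by
    linear_combination L^(k+1) * h2 + L^k * hL6))
  have k31 : x₃ * L = x₁ := hcan _ _ (by linear_combination L * h3 - h1)
  have k3 : ∀ k : ℕ, x₃ * L ^ (k+2) = -(P^2*U*L^k) := fun k => hcan _ _ (by
    linear_combination L^(k+2) * h3 + L^k * hL6)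
  have p11 : x₁ * x₁ = -(P*U*L^4) := hcan _ _ (hcan _ _ (by
    linear_combination (x₁*P + L^5) * h1 + L^4 * hL6))
  have p12 : x₁ * x₂ = -(U*L^4) := hcan _ _ (hcan _ _ (hcan _ _ (by
    linear_combination x₂*P^2 * h1 + L^5 * h2 + L^4 * hL6)))
  have p13 : x₁ * x₃ = -(P*U*L^3) := hcan _ _ (hcan _ _ (by
    linear_combination x₃*P * h1 + L^5 * h3 + L^3 * hL6))
  have p22 : x₂ * x₂ = x₃ * (-U) := hcan _ _ (hcan _ _ (hcan _ _ (hcan _ _ (by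
    linear_combination (x₂*P^2 + L^5) * h2 + L^4 * hL6 + U*P^3 * h3))))
  have p23 : x₂ * x₃ = -(U*L^3) := hcan _ _ (hcan _ _ (hcan _ _ (by
    linear_combination x₃*P * h2 + L^5 * h3 + L^3 * hL6)))
  have p33 : x₃ * x₃ = -(P*U*L^2) := hcan _ _ (hcan _ _ (by
    linear_combination (x₃*P + L^4) * h3 + L^2 * hL6))
  linear_combination x₁ * hG1 + x₂ * hG2 + x₃ * hG3
    + r1 * k1 0 + r2 * k1 1 + r3 * k1 2 + r4 * k1 3 + r5 * k1 4
    + s1 * k2 0 + s2 * k2 1 + s3 * k2 2 + s4 * k2 3 + s5 * k2 4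
    + t1 * k31 + t2 * k3 0 + t3 * k3 1 + t4 * k3 2 + t5 * k3 3
    + (A1*C1) * p11 + (A1*C2 + A2*C1) * p12 + (A1*C3 + A3*C1) * p13
    + (A2*C2) * p22 + (A2*C3 + A3*C2) * p23 + (A3*C3) * p33

/-- Let `p = 7` and let `O` be a complete DVR with uniformizer `π` and
ramification index `e = 3` over `ℤ_7` (so that `7/π³ ∈ O`), and `Γ = O ⊗ ℤ_7[ζ_7]`
(free over `O` with basis `1, λ, …, λ⁵`, where `λ⁶ = -7`). Set `x₁ = λ⁵/π`,
`x₂ = λ⁵/π²`, `x₃ = λ⁴/π`. Then `T = Γ + x₁O + x₂O + x₃O` is an `O`-subalgebra of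
the total fraction ring of `Γ` (i.e. it is closed under multiplication). -/
theorem stmt_7
    (O : Type) [CommRing O] [IsDomain O] [IsDiscreteValuationRing O] [CharZero O]
    [IsAdicComplete (IsLocalRing.maximalIdeal O) O]
    (π : O) (hπ : Irreducible π) (he : π ^ 3 ∣ (7 : O))
    (Γ : Type) [CommRing Γ] [Algebra O Γ]
    (lam : Γ) (hlam : lam ^ 6 = -(7 : Γ))
    (b : Module.Basis (Fin 6) O Γ) (hb : ∀ i : Fin 6, b i = lam ^ (i : ℕ))
    (hπΓ : algebraMap O Γ π ∈ nonZeroDivisors Γ)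
    (x₁ x₂ x₃ : FractionRing Γ)
    (hx₁ : x₁ * algebraMap Γ (FractionRing Γ) (algebraMap O Γ π)
        = algebraMap Γ (FractionRing Γ) (lam ^ 5))
    (hx₂ : x₂ * algebraMap Γ (FractionRing Γ) (algebraMap O Γ (π ^ 2))
        = algebraMap Γ (FractionRing Γ) (lam ^ 5))
    (hx₃ : x₃ * algebraMap Γ (FractionRing Γ) (algebraMap O Γ π)
        = algebraMap Γ (FractionRing Γ) (lam ^ 4))
    (T : Set (FractionRing Γ))
    (hT : T = {y | ∃ (g : Γ) (o₁ o₂ o₃ : O),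
        y = algebraMap Γ (FractionRing Γ) g
          + x₁ * algebraMap Γ (FractionRing Γ) (algebraMap O Γ o₁)
          + x₂ * algebraMap Γ (FractionRing Γ) (algebraMap O Γ o₂)
          + x₃ * algebraMap Γ (FractionRing Γ) (algebraMap O Γ o₃)}) :
    ∀ a ∈ T, ∀ c ∈ T, a * c ∈ T := by
  intro a ha c hc
  obtain ⟨u, hu⟩ := he
  subst hT
  obtain ⟨g, a1, a2, a3, rfl⟩ := ha
  obtain ⟨h, c1, c2, c3, rfl⟩ := hc
  have hP : IsUnit (algebraMap Γ (FractionRing Γ) (algebraMap O Γ (π))) :=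
    IsLocalization.map_units (M := nonZeroDivisors Γ) (FractionRing Γ) ⟨algebraMap O Γ π, hπΓ⟩
  have hcan : ∀ y z : FractionRing Γ, y * (algebraMap Γ (FractionRing Γ) (algebraMap O Γ (π))) = z * (algebraMap Γ (FractionRing Γ) (algebraMap O Γ (π))) → y = z :=
    fun y z hyz => hP.mul_left_injective hyz
  have h7Γ : algebraMap O Γ (π ^ 3 * u) = (7 : Γ) := by
    rw [← hu]; exact map_ofNat _ 7
  have hmul7 : ((algebraMap O Γ π)^3 * algebraMap O Γ u : Γ) = (7 : Γ) := by
    rw [← map_pow, ← map_mul]; exact h7Γ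
  have hL6 : (algebraMap Γ (FractionRing Γ) (lam)) ^ 6 = -((algebraMap Γ (FractionRing Γ) (algebraMap O Γ (π))) ^ 3 * (algebraMap Γ (FractionRing Γ) (algebraMap O Γ (u)))) := by
    rw [← map_pow, hlam, ← hmul7, map_neg, map_mul, map_pow]
  have h1 : x₁ * (algebraMap Γ (FractionRing Γ) (algebraMap O Γ (π))) = (algebraMap Γ (FractionRing Γ) (lam)) ^ 5 := by
    rw [hx₁, map_pow]
  have h3 : x₃ * (algebraMap Γ (FractionRing Γ) (algebraMap O Γ (π))) = (algebraMap Γ (FractionRing Γ) (lam)) ^ 4 := by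
    rw [hx₃, map_pow]
  have h2 : x₂ * (algebraMap Γ (FractionRing Γ) (algebraMap O Γ (π))) ^ 2 = (algebraMap Γ (FractionRing Γ) (lam)) ^ 5 := by
    rw [← map_pow, ← map_pow, hx₂, map_pow]
  have hrepr : ∀ G : Γ, G = algebraMap O Γ (b.repr G 0) * 1
      + algebraMap O Γ (b.repr G 1) * lam
      + algebraMap O Γ (b.repr G 2) * lam^2
      + algebraMap O Γ (b.repr G 3) * lam^3
      + algebraMap O Γ (b.repr G 4) * lam^4
      + algebraMap O Γ (b.repr G 5) * lam^5 := by
    intro G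
    have hh := Module.Basis.sum_repr b G
    rw [Fin.sum_univ_six] at hh
    simp only [hb, Algebra.smul_def] at hh
    conv_lhs => rw [← hh]
    norm_num [show ((3:Fin 6):ℕ)=3 from rfl, show ((4:Fin 6):ℕ)=4 from rfl,
      show ((5:Fin 6):ℕ)=5 from rfl]
  have hφrepr : ∀ G : Γ, algebraMap Γ (FractionRing Γ) (G)
      = algebraMap Γ (FractionRing Γ) (algebraMap O Γ (b.repr G 0)) + algebraMap Γ (FractionRing Γ) (algebraMap O Γ (b.repr G 1)) * (algebraMap Γ (FractionRing Γ) (lam))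
        + algebraMap Γ (FractionRing Γ) (algebraMap O Γ (b.repr G 2)) * (algebraMap Γ (FractionRing Γ) (lam))^2 + algebraMap Γ (FractionRing Γ) (algebraMap O Γ (b.repr G 3)) * (algebraMap Γ (FractionRing Γ) (lam))^3
        + algebraMap Γ (FractionRing Γ) (algebraMap O Γ (b.repr G 4)) * (algebraMap Γ (FractionRing Γ) (lam))^4 + algebraMap Γ (FractionRing Γ) (algebraMap O Γ (b.repr G 5)) * (algebraMap Γ (FractionRing Γ) (lam))^5 := by
    intro G
    conv_lhs => rw [hrepr G]
    simp only [map_add, map_mul, map_pow, map_one, mul_one]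
  have hhG1 : algebraMap Γ (FractionRing Γ) (g) * (algebraMap Γ (FractionRing Γ) (algebraMap O Γ (c1))) + algebraMap Γ (FractionRing Γ) (h) * (algebraMap Γ (FractionRing Γ) (algebraMap O Γ (a1)))
      = algebraMap Γ (FractionRing Γ) (algebraMap O Γ (b.repr (g * algebraMap O Γ c1 + h * algebraMap O Γ a1) 0)) + algebraMap Γ (FractionRing Γ) (algebraMap O Γ (b.repr (g * algebraMap O Γ c1 + h * algebraMap O Γ a1) 1)) * (algebraMap Γ (FractionRing Γ) (lam))
        + algebraMap Γ (FractionRing Γ) (algebraMap O Γ (b.repr (g * algebraMap O Γ c1 + h * algebraMap O Γ a1) 2)) * (algebraMap Γ (FractionRing Γ) (lam))^2 + algebraMap Γ (FractionRing Γ) (algebraMap O Γ (b.repr (g * algebraMap O Γ c1 + h * algebraMap O Γ a1) 3)) * (algebraMap Γ (FractionRing Γ) (lam))^3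
        + algebraMap Γ (FractionRing Γ) (algebraMap O Γ (b.repr (g * algebraMap O Γ c1 + h * algebraMap O Γ a1) 4)) * (algebraMap Γ (FractionRing Γ) (lam))^4 + algebraMap Γ (FractionRing Γ) (algebraMap O Γ (b.repr (g * algebraMap O Γ c1 + h * algebraMap O Γ a1) 5)) * (algebraMap Γ (FractionRing Γ) (lam))^5 := by
    rw [← map_mul, ← map_mul, ← map_add]; exact hφrepr _
  have hhG2 : algebraMap Γ (FractionRing Γ) (g) * (algebraMap Γ (FractionRing Γ) (algebraMap O Γ (c2))) + algebraMap Γ (FractionRing Γ) (h) * (algebraMap Γ (FractionRing Γ) (algebraMap O Γ (a2)))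
      = algebraMap Γ (FractionRing Γ) (algebraMap O Γ (b.repr (g * algebraMap O Γ c2 + h * algebraMap O Γ a2) 0)) + algebraMap Γ (FractionRing Γ) (algebraMap O Γ (b.repr (g * algebraMap O Γ c2 + h * algebraMap O Γ a2) 1)) * (algebraMap Γ (FractionRing Γ) (lam))
        + algebraMap Γ (FractionRing Γ) (algebraMap O Γ (b.repr (g * algebraMap O Γ c2 + h * algebraMap O Γ a2) 2)) * (algebraMap Γ (FractionRing Γ) (lam))^2 + algebraMap Γ (FractionRing Γ) (algebraMap O Γ (b.repr (g * algebraMap O Γ c2 + h * algebraMap O Γ a2) 3)) * (algebraMap Γ (FractionRing Γ) (lam))^3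
        + algebraMap Γ (FractionRing Γ) (algebraMap O Γ (b.repr (g * algebraMap O Γ c2 + h * algebraMap O Γ a2) 4)) * (algebraMap Γ (FractionRing Γ) (lam))^4 + algebraMap Γ (FractionRing Γ) (algebraMap O Γ (b.repr (g * algebraMap O Γ c2 + h * algebraMap O Γ a2) 5)) * (algebraMap Γ (FractionRing Γ) (lam))^5 := by
    rw [← map_mul, ← map_mul, ← map_add]; exact hφrepr _
  have hhG3 : algebraMap Γ (FractionRing Γ) (g) * (algebraMap Γ (FractionRing Γ) (algebraMap O Γ (c3))) + algebraMap Γ (FractionRing Γ) (h) * (algebraMap Γ (FractionRing Γ) (algebraMap O Γ (a3)))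
      = algebraMap Γ (FractionRing Γ) (algebraMap O Γ (b.repr (g * algebraMap O Γ c3 + h * algebraMap O Γ a3) 0)) + algebraMap Γ (FractionRing Γ) (algebraMap O Γ (b.repr (g * algebraMap O Γ c3 + h * algebraMap O Γ a3) 1)) * (algebraMap Γ (FractionRing Γ) (lam))
        + algebraMap Γ (FractionRing Γ) (algebraMap O Γ (b.repr (g * algebraMap O Γ c3 + h * algebraMap O Γ a3) 2)) * (algebraMap Γ (FractionRing Γ) (lam))^2 + algebraMap Γ (FractionRing Γ) (algebraMap O Γ (b.repr (g * algebraMap O Γ c3 + h * algebraMap O Γ a3) 3)) * (algebraMap Γ (FractionRing Γ) (lam))^3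
        + algebraMap Γ (FractionRing Γ) (algebraMap O Γ (b.repr (g * algebraMap O Γ c3 + h * algebraMap O Γ a3) 4)) * (algebraMap Γ (FractionRing Γ) (lam))^4 + algebraMap Γ (FractionRing Γ) (algebraMap O Γ (b.repr (g * algebraMap O Γ c3 + h * algebraMap O Γ a3) 5)) * (algebraMap Γ (FractionRing Γ) (lam))^5 := by
    rw [← map_mul, ← map_mul, ← map_add]; exact hφrepr _
  have key := aux_mul (algebraMap Γ (FractionRing Γ) (algebraMap O Γ (π))) (algebraMap Γ (FractionRing Γ) (lam)) (algebraMap Γ (FractionRing Γ) (algebraMap O Γ (u))) x₁ x₂ x₃ hcan hL6 h1 h2 h3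
    (algebraMap Γ (FractionRing Γ) (g)) (algebraMap Γ (FractionRing Γ) (h)) (algebraMap Γ (FractionRing Γ) (algebraMap O Γ (a1))) (algebraMap Γ (FractionRing Γ) (algebraMap O Γ (a2))) (algebraMap Γ (FractionRing Γ) (algebraMap O Γ (a3)))
    (algebraMap Γ (FractionRing Γ) (algebraMap O Γ (c1))) (algebraMap Γ (FractionRing Γ) (algebraMap O Γ (c2))) (algebraMap Γ (FractionRing Γ) (algebraMap O Γ (c3)))
    (algebraMap Γ (FractionRing Γ) (algebraMap O Γ (b.repr (g * algebraMap O Γ c1 + h * algebraMap O Γ a1) 0)))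
    (algebraMap Γ (FractionRing Γ) (algebraMap O Γ (b.repr (g * algebraMap O Γ c1 + h * algebraMap O Γ a1) 1)))
    (algebraMap Γ (FractionRing Γ) (algebraMap O Γ (b.repr (g * algebraMap O Γ c1 + h * algebraMap O Γ a1) 2)))
    (algebraMap Γ (FractionRing Γ) (algebraMap O Γ (b.repr (g * algebraMap O Γ c1 + h * algebraMap O Γ a1) 3)))
    (algebraMap Γ (FractionRing Γ) (algebraMap O Γ (b.repr (g * algebraMap O Γ c1 + h * algebraMap O Γ a1) 4)))
    (algebraMap Γ (FractionRing Γ) (algebraMap O Γ (b.repr (g * algebraMap O Γ c1 + h * algebraMap O Γ a1) 5)))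
    (algebraMap Γ (FractionRing Γ) (algebraMap O Γ (b.repr (g * algebraMap O Γ c2 + h * algebraMap O Γ a2) 0)))
    (algebraMap Γ (FractionRing Γ) (algebraMap O Γ (b.repr (g * algebraMap O Γ c2 + h * algebraMap O Γ a2) 1)))
    (algebraMap Γ (FractionRing Γ) (algebraMap O Γ (b.repr (g * algebraMap O Γ c2 + h * algebraMap O Γ a2) 2)))
    (algebraMap Γ (FractionRing Γ) (algebraMap O Γ (b.repr (g * algebraMap O Γ c2 + h * algebraMap O Γ a2) 3)))
    (algebraMap Γ (FractionRing Γ) (algebraMap O Γ (b.repr (g * algebraMap O Γ c2 + h * algebraMap O Γ a2) 4)))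
    (algebraMap Γ (FractionRing Γ) (algebraMap O Γ (b.repr (g * algebraMap O Γ c2 + h * algebraMap O Γ a2) 5)))
    (algebraMap Γ (FractionRing Γ) (algebraMap O Γ (b.repr (g * algebraMap O Γ c3 + h * algebraMap O Γ a3) 0)))
    (algebraMap Γ (FractionRing Γ) (algebraMap O Γ (b.repr (g * algebraMap O Γ c3 + h * algebraMap O Γ a3) 1)))
    (algebraMap Γ (FractionRing Γ) (algebraMap O Γ (b.repr (g * algebraMap O Γ c3 + h * algebraMap O Γ a3) 2)))
    (algebraMap Γ (FractionRing Γ) (algebraMap O Γ (b.repr (g * algebraMap O Γ c3 + h * algebraMap O Γ a3) 3)))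
    (algebraMap Γ (FractionRing Γ) (algebraMap O Γ (b.repr (g * algebraMap O Γ c3 + h * algebraMap O Γ a3) 4)))
    (algebraMap Γ (FractionRing Γ) (algebraMap O Γ (b.repr (g * algebraMap O Γ c3 + h * algebraMap O Γ a3) 5)))
    hhG1 hhG2 hhG3
  refine ⟨g * h + (-(algebraMap O Γ (π*u) * lam^4 * (algebraMap O Γ a1 * algebraMap O Γ c1))) + (-(algebraMap O Γ u * lam^4 * (algebraMap O Γ a1 * algebraMap O Γ c2 + algebraMap O Γ a2 * algebraMap O Γ c1))) + (-(algebraMap O Γ (π*u) * lam^3 * (algebraMap O Γ a1 * algebraMap O Γ c3 + algebraMap O Γ a3 * algebraMap O Γ c1))) + (-(algebraMap O Γ u * lam^3 * (algebraMap O Γ a2 * algebraMap O Γ c3 + algebraMap O Γ a3 * algebraMap O Γ c2))) + (-(algebraMap O Γ (π*u) * lam^2 * (algebraMap O Γ a3 * algebraMap O Γ c3))) + (-(algebraMap O Γ (π^2*u) * (algebraMap O Γ (b.repr (g * algebraMap O Γ c1 + h * algebraMap O Γ a1) 1) + algebraMap O Γ (b.repr (g * algebraMap O Γ c1 + h * algebraMap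 O Γ a1) 2) * lam + algebraMap O Γ (b.repr (g * algebraMap O Γ c1 + h * algebraMap O Γ a1) 3) * lam^2 + algebraMap O Γ (b.repr (g * algebraMap O Γ c1 + h * algebraMap O Γ a1) 4) * lam^3 + algebraMap O Γ (b.repr (g * algebraMap O Γ c1 + h * algebraMap O Γ a1) 5) * lam^4))) + (-(algebraMap O Γ (π*u) * (algebraMap O Γ (b.repr (g * algebraMap O Γ c2 + h * algebraMap O Γ a2) 1) + algebraMap O Γ (b.repr (g * algebraMap O Γ c2 + h * algebraMap O Γ a2) 2) * lam + algebraMap O Γ (b.repr (g * algebraMap O Γ c2 + h * algebraMap O Γ a2) 3) * lam^2 + algebraMap O Γ (b.repr (g * algebraMap O Γ c2 + h * algebraMap O Γ a2) 4) * lam^3 + algebraMap O Γ (b.repr (g * algebraMap O Γ c2 + h * algebraMap O Γ a2) 5) * lam^4))) + (-(algebraMap O Γ (π^2*u) * (algebraMap O Γ (b.repr (g * algebraMap O Γ c3 + h * algebraMap O Γ a3) 2) + algebraMap O Γ (b.repr (g * algebraMap O Γ c3 + h * algebraMap O Γ a3) 3) * lam + algebraMap O Γ (b.repr (g * algebraMap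 O Γ c3 + h * algebraMap O Γ a3) 4) * lam^2 + algebraMap O Γ (b.repr (g * algebraMap O Γ c3 + h * algebraMap O Γ a3) 5) * lam^3))),
    b.repr (g * algebraMap O Γ c1 + h * algebraMap O Γ a1) 0 + b.repr (g * algebraMap O Γ c3 + h * algebraMap O Γ a3) 1,
    b.repr (g * algebraMap O Γ c2 + h * algebraMap O Γ a2) 0,
    b.repr (g * algebraMap O Γ c3 + h * algebraMap O Γ a3) 0 + (-(u * (a2 * c2))), ?_⟩
  rw [key]
  simp only [map_add, map_mul, map_neg, map_pow]
  ring
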